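/- Let d ≥ 1 and let x_q = (d+1)·e₁ ∈ ℝ^d where e₁ = (1, 0, …, 0). Then for every x ∈ ℝ^d with |x_i| ≤ 1 for all coordinates i (i.e. x in the hypercube [−1, 1]^d), one has (d² + d − 1)·‖x‖² ≤ d·‖x_q − x‖² (Euclidean norms). Equivalently, the ratio ‖x‖/‖x_q − x‖ over the hypercube [−1, 1]^d is maximized at the corner 𝟙 = (1, …, 1), where it equals √(d/(d² + d − 1)). -/
import Mathlib


/-- Over the hypercube `[−1,1]^d`, the distance ratio to the query points `0` and
`x_q = (d+1)·e₁` is maximized at the corner `𝟙`: every `x` with `|x_i| ≤ 1` for all `i`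
satisfies `(d² + d − 1)‖x‖² ≤ d‖x_q − x‖²`. -/
theorem stmt16 (d : ℕ) (hd : 1 ≤ d) :
    ∀ x : EuclideanSpace ℝ (Fin d), (∀ i : Fin d, |x i| ≤ 1) →
      ((d : ℝ)^2 + d - 1) * ‖x‖^2
        ≤ d * ‖((d : ℝ) + 1) • EuclideanSpace.single (⟨0, hd⟩ : Fin d) 1 - x‖^2 := by
  intro x hx
  set z : Fin d := ⟨0, hd⟩
  set t : ℝ := x z with ht
  have hnx : ‖x‖^2 = ∑ i, x i ^ 2 := by
    rw [EuclideanSpace.norm_eq, Real.sq_sqrt (by positivity)]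
    simp [sq_abs]
  have hy : ∀ i, (((d : ℝ) + 1) • EuclideanSpace.single z (1:ℝ) - x) i
      = (if i = z then ((d:ℝ)+1) else 0) - x i := by
    intro i
    simp [EuclideanSpace.single_apply]
  have hny : ‖((d : ℝ) + 1) • EuclideanSpace.single z (1:ℝ) - x‖^2
      = (∑ i, x i ^ 2) - 2*((d:ℝ)+1)*t + ((d:ℝ)+1)^2 := by
    rw [EuclideanSpace.norm_eq, Real.sq_sqrt (by positivity)]
    have : ∀ i, ‖(((d : ℝ) + 1) • EuclideanSpace.single z (1:ℝ) - x) i‖^2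
        = x i ^ 2 - 2*((d:ℝ)+1)*((if i = z then (1:ℝ) else 0) * x i)
          + ((d:ℝ)+1)^2 * (if i = z then (1:ℝ) else 0) := by
      intro i
      rw [Real.norm_eq_abs, sq_abs, hy i]
      split <;> ring
    rw [Finset.sum_congr rfl fun i _ => this i]
    rw [Finset.sum_add_distrib, Finset.sum_sub_distrib, ← Finset.mul_sum, ← Finset.mul_sum]
    simp [Finset.sum_ite_eq', ht]
  rw [hnx, hny]
  -- bound the sum
  have hsum : ∑ i, x i ^ 2 ≤ t^2 + ((d:ℝ) - 1) := by
    have h1 : ∑ i, x i ^ 2 = x z ^ 2 + ∑ i ∈ Finset.univ \ {z}, x i ^ 2 := by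
      rw [Finset.sum_eq_add_sum_sdiff_singleton_of_mem (Finset.mem_univ z)]
    rw [h1]
    have h2 : ∑ i ∈ Finset.univ \ {z}, x i ^ 2 ≤ (d:ℝ) - 1 := by
      calc ∑ i ∈ Finset.univ \ {z}, x i ^ 2 ≤ ∑ i ∈ Finset.univ \ {z}, (1:ℝ) := by
            apply Finset.sum_le_sum
            intro i _
            have := hx i
            nlinarith [abs_nonneg (x i), sq_abs (x i)]
        _ = (d:ℝ) - 1 := by
            rw [Finset.sum_const]
            simp [Finset.card_sdiff_of_subset, Nat.cast_sub hd]
    linarith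
  have hsum0 : (0:ℝ) ≤ ∑ i, x i ^ 2 := by positivity
  have hd1 : (1:ℝ) ≤ (d:ℝ) := by exact_mod_cast hd
  have ht1 : |t| ≤ 1 := hx z
  have ht1a : -1 ≤ t := neg_le_of_abs_le ht1
  have ht1b : t ≤ 1 := le_of_abs_le ht1
  nlinarith [sq_nonneg (t-1), sq_nonneg (t+1), mul_nonneg (sub_nonneg.2 hd1) (sub_nonneg.2 ht1b),
    mul_nonneg (mul_nonneg (sub_nonneg.2 hd1) (sub_nonneg.2 hd1)) (sub_nonneg.2 ht1b),
    mul_nonneg (sub_nonneg.2 hd1) (sq_nonneg (t-1))]
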